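/- Let f : T^3 → T^3 be an area-preserving, orientation-preserving C^1-diffeomorphism with τ-polynomial uniform growth of the derivative, and suppose the limit function g = lim_{n→∞} n^{-τ} Df^n is the constant matrix c^T a, where a, c ∈ R^3 are mutually orthogonal non-zero vectors. Then the subgroup G(a) = { m ∈ Z^3 : m ⊥ a } has rank 2, and τ equals either 1 or 2. -/

import Mathlib

open MeasureTheory Filter Topology Matrix

noncomputable section

/-- The circle `ℝ/ℤ`. -/
abbrev 𝕋 : Type := AddCircle (1 : ℝ)

/-- Projection of `ℝ^d` onto the torus `𝕋^d`. -/
def Tproj {d : ℕ} (x : Fin d → ℝ) : Fin d → 𝕋 := fun i => (x i : 𝕋)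

/-- The `d×d` matrix of partial derivatives of a map `F : ℝ^d → ℝ^d` at a point. -/
def Dmat {d : ℕ} (F : (Fin d → ℝ) → (Fin d → ℝ)) (x : Fin d → ℝ) :
    Matrix (Fin d) (Fin d) ℝ :=
  Matrix.of fun i j => fderiv ℝ (fun y => F y i) x (Pi.single j 1)

lemma nat_rpow_lim {σ β : ℝ} (h : Tendsto (fun n : ℕ => (n:ℝ) ^ σ) atTop (𝓝 β)) :
    (σ < 0 ∧ β = 0) ∨ (σ = 0 ∧ β = 1) := by
  rcases lt_trichotomy σ 0 with hσ | hσ | hσ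
  · left
    refine ⟨hσ, tendsto_nhds_unique h ?_⟩
    have := (tendsto_rpow_neg_atTop (neg_pos.mpr hσ)).comp (tendsto_natCast_atTop_atTop (R := ℝ))
    simpa [Function.comp_def] using this
  · right
    have h1 : Tendsto (fun n : ℕ => (n:ℝ) ^ σ) atTop (𝓝 1) := by
      simp [hσ]
    exact ⟨hσ, tendsto_nhds_unique h h1⟩
  · exfalso
    have : Tendsto (fun n : ℕ => (n:ℝ) ^ σ) atTop atTop :=
      (tendsto_rpow_atTop hσ).comp (tendsto_natCast_atTop_atTop (R := ℝ))
    exact not_tendsto_nhds_of_tendsto_atTop this β h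

lemma ch3 {R : Type*} [CommRing R] (M : Matrix (Fin 3) (Fin 3) R) :
    M^3 = (M 0 0 + M 1 1 + M 2 2) • M^2
      - ((M 1 1*M 2 2 - M 1 2*M 2 1) + (M 0 0*M 2 2 - M 0 2*M 2 0)
          + (M 0 0*M 1 1 - M 0 1*M 1 0)) • M
      + (M 0 0*(M 1 1*M 2 2 - M 1 2*M 2 1) - M 0 1*(M 1 0*M 2 2 - M 1 2*M 2 0)
          + M 0 2*(M 1 0*M 2 1 - M 1 1*M 2 0)) • (1 : Matrix (Fin 3) (Fin 3) R) := by
  ext i j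
  fin_cases i <;> fin_cases j <;>
    simp [pow_succ, Matrix.mul_apply, Fin.sum_univ_three, Matrix.one_apply] <;> ring

lemma tendsto_shift1 {u : ℕ → Matrix (Fin 3) (Fin 3) ℝ} {L : Matrix (Fin 3) (Fin 3) ℝ} {τ : ℝ}
    (h : Tendsto (fun n : ℕ => ((n:ℝ)^τ)⁻¹ • u n) atTop (𝓝 L)) :
    Tendsto (fun n : ℕ => ((n:ℝ)^τ)⁻¹ • u (n+1)) atTop (𝓝 L) := by
  have hρ : Tendsto (fun n : ℕ => ((n:ℝ)^τ)⁻¹ * (((n:ℝ)+1)^τ)) atTop (𝓝 1) := by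
    have h1 : Tendsto (fun n : ℕ => ((n:ℝ)+1)/(n:ℝ)) atTop (𝓝 1) := by
      have := (tendsto_const_nhds : Tendsto (fun _ : ℕ => (1:ℝ)) atTop (𝓝 1)).add
        tendsto_one_div_atTop_nhds_zero_nat
      rw [add_zero] at this
      refine this.congr' ?_
      filter_upwards [eventually_ge_atTop 1] with n hn
      have : (n:ℝ) ≠ 0 := by positivity
      field_simp
    have h2 : Tendsto (fun n : ℕ => (((n:ℝ)+1)/(n:ℝ)) ^ τ) atTop (𝓝 1) := by
      have hc : ContinuousAt (fun x : ℝ => x ^ τ) 1 :=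
        Real.continuousAt_rpow_const 1 τ (Or.inl one_ne_zero)
      have := hc.tendsto.comp h1
      simpa [Real.one_rpow, Function.comp_def] using this
    refine h2.congr' ?_
    filter_upwards [eventually_ge_atTop 1] with n hn
    have hn0 : (0:ℝ) < (n:ℝ) := by positivity
    rw [Real.div_rpow (by positivity) hn0.le, div_eq_mul_inv, mul_comm]
  have hsub : Tendsto (fun n : ℕ => (((n+1:ℕ):ℝ)^τ)⁻¹ • u (n+1)) atTop (𝓝 L) :=
    h.comp (tendsto_add_atTop_nat 1)
  have key : ∀ n : ℕ, (((n:ℝ)^τ)⁻¹ * (((n:ℝ)+1)^τ)) • ((((n+1:ℕ):ℝ)^τ)⁻¹ • u (n+1))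
      = ((n:ℝ)^τ)⁻¹ • u (n+1) := by
    intro n
    rw [smul_smul]
    congr 1
    have hpos : (0:ℝ) < ((n:ℝ)+1)^τ := Real.rpow_pos_of_pos (by positivity) τ
    push_cast
    rw [mul_assoc, mul_inv_cancel₀ hpos.ne', mul_one]
  have := hρ.smul hsub
  rw [one_smul] at this
  exact this.congr (fun n => key n)

lemma tendsto_shiftk {τ : ℝ} {L : Matrix (Fin 3) (Fin 3) ℝ}
    {Nr : Matrix (Fin 3) (Fin 3) ℝ}
    (h : Tendsto (fun n : ℕ => ((n:ℝ)^τ)⁻¹ • Nr ^ n) atTop (𝓝 L)) (k : ℕ) :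
    Tendsto (fun n : ℕ => ((n:ℝ)^τ)⁻¹ • Nr ^ (n+k)) atTop (𝓝 L) := by
  induction k with
  | zero => simpa using h
  | succ k ih =>
      have := tendsto_shift1 (u := fun n => Nr ^ (n+k)) ih
      refine this.congr (fun n => ?_)
      show ((n:ℝ)^τ)⁻¹ • Nr ^ (n + 1 + k) = _
      rw [show n + 1 + k = n + (k+1) by omega]

lemma cast_entry (N : Matrix (Fin 3) (Fin 3) ℤ) (u v : ℤ) (i j : Fin 3) :
    (((N*N + u•N + v•1 : Matrix (Fin 3) (Fin 3) ℤ)) i j : ℝ)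
      = (((N.map (fun z : ℤ => (z:ℝ)))^2 + ((u:ℝ) • (N.map (fun z : ℤ => (z:ℝ))))
          + ((v:ℝ) • (1 : Matrix (Fin 3) (Fin 3) ℝ))) i j) := by
  simp only [Matrix.add_apply, Matrix.smul_apply, Matrix.one_apply, smul_eq_mul, pow_two,
    Matrix.mul_apply, Fin.sum_univ_three, Matrix.map_apply]
  rcases eq_or_ne i j with h | h <;> simp [h] <;> push_cast <;> ring

lemma stepB (N : Matrix (Fin 3) (Fin 3) ℤ) {τ : ℝ} (hτ : 0 < τ) {a c : Fin 3 → ℝ}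
    (ha : a ≠ 0) (hc : c ≠ 0)
    (hlim : Tendsto (fun n : ℕ => ((n:ℝ)^τ)⁻¹ • ((N.map (fun z : ℤ => (z:ℝ)))^n))
      atTop (𝓝 (vecMulVec c a))) :
    (∃ ρ : ℝ, ρ ≠ 0 ∧ ∃ W : Matrix (Fin 3) (Fin 3) ℤ,
        ∀ i j, c i * a j = ρ * (W i j : ℝ)) ∧ (τ = 1 ∨ τ = 2) := by
  set Nr : Matrix (Fin 3) (Fin 3) ℝ := N.map (fun z : ℤ => (z:ℝ)) with hNrdef
  set L : Matrix (Fin 3) (Fin 3) ℝ := vecMulVec c a with hLdef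
  -- nonzero entry of L
  obtain ⟨i0, hi0⟩ := Function.ne_iff.mp hc
  obtain ⟨j0, hj0⟩ := Function.ne_iff.mp ha
  simp only [Pi.zero_apply] at hi0 hj0
  have hLe : ∀ i j, L i j = c i * a j := fun i j => rfl
  have hL0 : L i0 j0 ≠ 0 := by rw [hLe]; exact mul_ne_zero hi0 hj0
  have hscal : ∀ x : ℝ, x • L = 0 → x = 0 := by
    intro x hx
    have := congrFun (congrFun hx i0) j0
    simp only [Matrix.smul_apply, Matrix.zero_apply, smul_eq_mul] at this
    rcases mul_eq_zero.mp this with h | h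
    · exact h
    · exact absurd h hL0
  -- r n → 0
  have hr0 : Tendsto (fun n : ℕ => ((n:ℝ)^τ)⁻¹) atTop (𝓝 0) := by
    have := ((tendsto_rpow_atTop hτ).comp (tendsto_natCast_atTop_atTop (R := ℝ))).inv_tendsto_atTop
    exact this
  -- entry extraction
  have hent : ∀ {f : ℕ → Matrix (Fin 3) (Fin 3) ℝ} {M : Matrix (Fin 3) (Fin 3) ℝ},
      Tendsto f atTop (𝓝 M) → ∀ i j, Tendsto (fun n => f n i j) atTop (𝓝 (M i j)) := by
    intro f M h i j
    exact (((continuous_apply j).comp (continuous_apply i)).tendsto M).comp h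
  -- multiplication on the right by a constant matrix
  have hMul : ∀ B : Matrix (Fin 3) (Fin 3) ℝ,
      Tendsto (fun n : ℕ => ((n:ℝ)^τ)⁻¹ • (Nr^n * B)) atTop (𝓝 (L * B)) := by
    intro B
    have hcont : Continuous fun M : Matrix (Fin 3) (Fin 3) ℝ => M * B :=
      continuous_id.matrix_mul continuous_const
    have := (hcont.tendsto L).comp hlim
    refine this.congr fun n => ?_
    simp [Function.comp, smul_mul_assoc]
  have hS : ∀ k, Tendsto (fun n : ℕ => ((n:ℝ)^τ)⁻¹ • Nr^(n+k)) atTop (𝓝 L) :=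
    tendsto_shiftk hlim
  -- characteristic polynomial coefficients
  set t : ℝ := Nr 0 0 + Nr 1 1 + Nr 2 2 with htdef
  set s : ℝ := (Nr 1 1*Nr 2 2 - Nr 1 2*Nr 2 1) + (Nr 0 0*Nr 2 2 - Nr 0 2*Nr 2 0)
      + (Nr 0 0*Nr 1 1 - Nr 0 1*Nr 1 0) with hsdef
  set d : ℝ := Nr 0 0*(Nr 1 1*Nr 2 2 - Nr 1 2*Nr 2 1) - Nr 0 1*(Nr 1 0*Nr 2 2 - Nr 1 2*Nr 2 0)
      + Nr 0 2*(Nr 1 0*Nr 2 1 - Nr 1 1*Nr 2 0) with hddef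
  have hCH : Nr^3 = t • Nr^2 - s • Nr + d • 1 := ch3 Nr
  -- p(1) = 0
  have hrec3 : ∀ n : ℕ, Nr^(n+3) = t • Nr^(n+2) - s • Nr^(n+1) + d • Nr^n := by
    intro n
    have h1 : Nr^(n+3) = Nr^n * Nr^3 := by rw [← pow_add]
    rw [h1, hCH, mul_add, mul_sub, mul_smul_comm, mul_smul_comm, mul_smul_comm, mul_one,
      ← pow_add, ← pow_succ]
  have hlim3' : Tendsto (fun n : ℕ => ((n:ℝ)^τ)⁻¹ • Nr^(n+3)) atTop
      (𝓝 (t • L - s • L + d • L)) := by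
    have := (((hS 2).const_smul t).sub ((hS 1).const_smul s)).add (hlim.const_smul d)
    refine this.congr fun n => ?_
    rw [hrec3 n]
    module
  have hsum : L = t • L - s • L + d • L := tendsto_nhds_unique (hS 3) hlim3'
  have hp1 : 1 - t + s - d = 0 := by
    have h0 : (1 - t + s - d) • L = 0 := by
      have : L - (t • L - s • L + d • L) = 0 := by rw [← hsum]; abel
      rw [← this]; module
    exact hscal _ h0
  -- the quadratic factor
  set C : Matrix (Fin 3) (Fin 3) ℝ := Nr^2 + (1-t) • Nr + d • 1 with hCdef
  have hNC : Nr * C = C := by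
    have expand : Nr * C = Nr^3 + (1-t) • Nr^2 + d • Nr := by
      rw [hCdef, mul_add, mul_add, mul_smul_comm, mul_smul_comm, mul_one, ← pow_succ',
        ← pow_two]
    rw [expand, hCH, hCdef]
    match_scalars <;> linarith
  have hpowC : ∀ n : ℕ, Nr^n * C = C := by
    intro n
    induction n with
    | zero => simp
    | succ n ih => rw [pow_succ, mul_assoc, hNC, ih]
  have hLC : L * C = 0 := by
    have h2 : Tendsto (fun n : ℕ => ((n:ℝ)^τ)⁻¹ • (Nr^n * C)) atTop (𝓝 0) := by
      have := hr0.smul_const C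
      rw [zero_smul] at this
      exact this.congr fun n => by rw [hpowC n]
    exact tendsto_nhds_unique (hMul C) h2
  -- q(1) = 0
  have hrecC : ∀ n : ℕ, Nr^n * C = Nr^(n+2) + (1-t) • Nr^(n+1) + d • Nr^n := by
    intro n
    rw [hCdef, mul_add, mul_add, mul_smul_comm, mul_smul_comm, mul_one, ← pow_add, ← pow_succ]
  have hql : Tendsto (fun n : ℕ => ((n:ℝ)^τ)⁻¹ • (Nr^n * C)) atTop
      (𝓝 (L + (1-t) • L + d • L)) := by
    have := ((hS 2).add ((hS 1).const_smul (1-t))).add (hlim.const_smul d)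
    refine this.congr fun n => ?_
    rw [hrecC n]
    module
  have hq1 : 2 - t + d = 0 := by
    have huniq : L + (1-t) • L + d • L = L * C := tendsto_nhds_unique hql (hMul C)
    rw [hLC] at huniq
    have h0 : (2 - t + d) • L = 0 := by rw [← huniq]; module
    exact hscal _ h0
  have hC2 : C = Nr^2 - (1+d) • Nr + d • 1 := by
    rw [hCdef]; match_scalars <;> linarith
  -- L * Nr = L
  have hLN : L * Nr = L := by
    have h1 : Tendsto (fun n : ℕ => ((n:ℝ)^τ)⁻¹ • (Nr^n * Nr)) atTop (𝓝 L) :=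
      (hS 1).congr fun n => by rw [pow_succ]
    exact tendsto_nhds_unique (hMul Nr) h1
  -- identity I3
  have hI3 : ∀ n : ℕ, Nr^n * (Nr - d • 1) = (Nr - d • 1) + (n:ℝ) • C := by
    intro n
    induction n with
    | zero => simp
    | succ n ih =>
      rw [pow_succ', mul_assoc, ih, mul_add, mul_sub, mul_smul_comm, mul_one, mul_smul_comm,
        hNC, ← pow_two]
      rw [hC2]
      push_cast
      match_scalars <;> ring
  have hI3lim : Tendsto (fun n : ℕ => ((n:ℝ) * ((n:ℝ)^τ)⁻¹) • C) atTop (𝓝 ((1-d) • L)) := by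
    have hLX : L * (Nr - d • 1) = (1-d) • L := by
      rw [mul_sub, hLN, mul_smul_comm, mul_one]
      module
    have t1 : Tendsto (fun n : ℕ => ((n:ℝ)^τ)⁻¹ • (Nr^n * (Nr - d • 1))) atTop
        (𝓝 ((1-d) • L)) := by rw [← hLX]; exact hMul _
    have t2 : Tendsto (fun n : ℕ => ((n:ℝ)^τ)⁻¹ • (Nr - d • 1)) atTop (𝓝 0) := by
      have := hr0.smul_const (Nr - d • 1)
      rwa [zero_smul] at this
    have := t1.sub t2
    rw [sub_zero] at this
    refine this.congr fun n => ?_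
    rw [hI3 n]
    module
  -- main case split
  by_cases hCz : C = 0
  · -- unipotent with (Nr-1)^2 = 0 : τ = 1
    have hd1 : d = 1 := by
      have h2 : Tendsto (fun n : ℕ => ((n:ℝ) * ((n:ℝ)^τ)⁻¹) • C) atTop (𝓝 0) := by
        simp [hCz]
      have h0 : (1-d) • L = 0 := tendsto_nhds_unique hI3lim h2
      have h := hscal _ h0
      exact (sub_eq_zero.mp h).symm
    set D : Matrix (Fin 3) (Fin 3) ℝ := Nr - 1 with hDdef
    have hNrD : Nr = 1 + D := by rw [hDdef]; abel
    have hDD : D * D = C := by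
      rw [hDdef, hC2, hd1, sub_mul, mul_sub, mul_sub, ← pow_two]
      simp only [mul_one, one_mul]
      match_scalars <;> ring
    have hD2 : D * D = 0 := by rw [hDD, hCz]
    have hI4 : ∀ n : ℕ, Nr^n = 1 + (n:ℝ) • D := by
      intro n
      induction n with
      | zero => simp
      | succ n ih =>
        rw [pow_succ', ih]
        have hexp : Nr * (1 + (n:ℝ) • D) = 1 + ((n:ℝ)+1) • D + (n:ℝ) • (D * D) := by
          rw [hNrD, add_mul, one_mul, mul_add, mul_one, mul_smul_comm]
          match_scalars <;> ring
        rw [hexp, hD2]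
        push_cast
        match_scalars <;> ring
    have hDlim : Tendsto (fun n : ℕ => ((n:ℝ) * ((n:ℝ)^τ)⁻¹) • D) atTop (𝓝 L) := by
      have t2 : Tendsto (fun n : ℕ => ((n:ℝ)^τ)⁻¹ • (1 : Matrix (Fin 3) (Fin 3) ℝ)) atTop
          (𝓝 0) := by
        have := hr0.smul_const (1 : Matrix (Fin 3) (Fin 3) ℝ)
        rwa [zero_smul] at this
      have := hlim.sub t2
      rw [sub_zero] at this
      refine this.congr fun n => ?_
      rw [hI4 n]
      module
    have hDne : D ≠ 0 := by
      intro h0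
      apply hL0
      have hz : Tendsto (fun n : ℕ => ((n:ℝ) * ((n:ℝ)^τ)⁻¹) • D) atTop (𝓝 0) := by simp [h0]
      have := tendsto_nhds_unique hDlim hz
      rw [this]
      simp
    have hDij : ∃ i j, D i j ≠ 0 := by
      by_contra h
      push_neg at h
      exact hDne (by ext i j; simpa using h i j)
    obtain ⟨i1, j1, hD1⟩ := hDij
    have hnr : Tendsto (fun n : ℕ => (n:ℝ) * ((n:ℝ)^τ)⁻¹) atTop (𝓝 (L i1 j1 / D i1 j1)) := by
      have := hent hDlim i1 j1
      simp only [Matrix.smul_apply, smul_eq_mul] at this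
      have h2 := this.div_const (D i1 j1)
      refine h2.congr fun n => ?_
      exact mul_div_cancel_right₀ _ hD1
    have hrw : Tendsto (fun n : ℕ => (n:ℝ) ^ ((1:ℝ) - τ)) atTop (𝓝 (L i1 j1 / D i1 j1)) := by
      refine hnr.congr' ?_
      filter_upwards [eventually_ge_atTop 1] with n hn
      have hn0 : (0:ℝ) < (n:ℝ) := by positivity
      rw [Real.rpow_sub hn0, Real.rpow_one, div_eq_mul_inv]
    rcases nat_rpow_lim hrw with ⟨hlt, hβ0⟩ | ⟨heq, hβ1⟩
    · exfalso
      apply hL0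
      rw [hβ0] at hnr
      have hz := hnr.smul_const D
      rw [zero_smul] at hz
      have := tendsto_nhds_unique hDlim hz
      rw [this]; simp
    · have hτ1 : τ = 1 := by linarith
      rw [hβ1] at hnr
      have hLD : L = D := by
        have := hnr.smul_const D
        rw [one_smul] at this
        exact tendsto_nhds_unique hDlim this
      refine ⟨⟨1, one_ne_zero, N - 1, fun i j => ?_⟩, Or.inl hτ1⟩
      have h1 : c i * a j = D i j := by rw [← hLe i j, hLD]
      rw [h1, hDdef, one_mul]
      simp only [Matrix.sub_apply, Matrix.map_apply, Matrix.one_apply, Int.cast_sub, hNrdef]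
      split_ifs <;> simp
  · -- C ≠ 0
    have hCij : ∃ i j, C i j ≠ 0 := by
      by_contra h
      push_neg at h
      exact hCz (by ext i j; simpa using h i j)
    obtain ⟨i1, j1, hC1⟩ := hCij
    have hnr : Tendsto (fun n : ℕ => (n:ℝ) * ((n:ℝ)^τ)⁻¹) atTop
        (𝓝 ((1-d) * L i1 j1 / C i1 j1)) := by
      have := hent hI3lim i1 j1
      simp only [Matrix.smul_apply, smul_eq_mul] at this
      have h2 := this.div_const (C i1 j1)
      refine h2.congr fun n => ?_
      exact mul_div_cancel_right₀ _ hC1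
    have hrw : Tendsto (fun n : ℕ => (n:ℝ) ^ ((1:ℝ) - τ)) atTop
        (𝓝 ((1-d) * L i1 j1 / C i1 j1)) := by
      refine hnr.congr' ?_
      filter_upwards [eventually_ge_atTop 1] with n hn
      have hn0 : (0:ℝ) < (n:ℝ) := by positivity
      rw [Real.rpow_sub hn0, Real.rpow_one, div_eq_mul_inv]
    rcases nat_rpow_lim hrw with ⟨hlt, hγ0⟩ | ⟨heq, hγ1⟩
    · -- τ = 2 case
      rw [hγ0] at hnr
      have h1dL : (1-d) • L = 0 := by
        have hz := hnr.smul_const C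
        rw [zero_smul] at hz
        exact tendsto_nhds_unique hI3lim hz
      have hd1 : d = 1 := by
        have h := hscal _ h1dL
        exact (sub_eq_zero.mp h).symm
      set D : Matrix (Fin 3) (Fin 3) ℝ := Nr - 1 with hDdef
      have hNrD : Nr = 1 + D := by rw [hDdef]; abel
      have hDD : D * D = C := by
        rw [hDdef, hC2, hd1, sub_mul, mul_sub, mul_sub, ← pow_two]
        simp only [mul_one, one_mul]
        match_scalars <;> ring
      have hDC : D * C = 0 := by
        rw [hDdef, sub_mul, one_mul, hNC, sub_self]
      have hI5 : ∀ n : ℕ, Nr^n = 1 + (n:ℝ) • D + ((n:ℝ)*((n:ℝ)-1)/2) • C := by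
        intro n
        induction n with
        | zero => norm_num
        | succ n ih =>
          rw [pow_succ', ih]
          have hexp : Nr * (1 + (n:ℝ) • D + ((n:ℝ)*((n:ℝ)-1)/2) • C)
              = 1 + (n:ℝ) • D + ((n:ℝ)*((n:ℝ)-1)/2) • C
                + (D + (n:ℝ) • (D*D) + ((n:ℝ)*((n:ℝ)-1)/2) • (D*C)) := by
            rw [hNrD, add_mul, one_mul, mul_add, mul_add, mul_one, mul_smul_comm, mul_smul_comm]
          rw [hexp, hDD, hDC]
          push_cast
          match_scalars <;> ring
      have hnr0 : Tendsto (fun n : ℕ => ((n:ℝ) * ((n:ℝ)^τ)⁻¹)) atTop (𝓝 0) := hnr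
      have hClim : Tendsto (fun n : ℕ => (((n:ℝ)*((n:ℝ)-1)/2) * ((n:ℝ)^τ)⁻¹) • C) atTop
          (𝓝 L) := by
        have t2 : Tendsto (fun n : ℕ => ((n:ℝ)^τ)⁻¹ • (1 : Matrix (Fin 3) (Fin 3) ℝ)) atTop
            (𝓝 0) := by
          have := hr0.smul_const (1 : Matrix (Fin 3) (Fin 3) ℝ)
          rwa [zero_smul] at this
        have t3 : Tendsto (fun n : ℕ => ((n:ℝ) * ((n:ℝ)^τ)⁻¹) • D) atTop (𝓝 0) := by
          have := hnr0.smul_const D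
          rwa [zero_smul] at this
        have := (hlim.sub t2).sub t3
        rw [sub_zero, sub_zero] at this
        refine this.congr fun n => ?_
        rw [hI5 n]
        module
      have hδ : Tendsto (fun n : ℕ => ((n:ℝ)*((n:ℝ)-1)/2) * ((n:ℝ)^τ)⁻¹) atTop
          (𝓝 (L i1 j1 / C i1 j1)) := by
        have := hent hClim i1 j1
        simp only [Matrix.smul_apply, smul_eq_mul] at this
        have h2 := this.div_const (C i1 j1)
        refine h2.congr fun n => ?_
        exact mul_div_cancel_right₀ _ hC1
      have h2rw : Tendsto (fun n : ℕ => (n:ℝ) ^ ((2:ℝ) - τ)) atTop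
          (𝓝 (2 * (L i1 j1 / C i1 j1))) := by
        have comb := (hδ.const_mul 2).add hnr0
        rw [add_zero] at comb
        refine comb.congr' ?_
        filter_upwards [eventually_ge_atTop 1] with n hn
        have hn0 : (0:ℝ) < (n:ℝ) := by positivity
        have hrpow : (n:ℝ) ^ ((2:ℝ) - τ) = (n:ℝ)^(2:ℕ) * ((n:ℝ)^τ)⁻¹ := by
          rw [Real.rpow_sub hn0, div_eq_mul_inv, ← Real.rpow_natCast (n:ℝ) 2]
          norm_num
        rw [hrpow]
        ring
      rcases nat_rpow_lim h2rw with ⟨hlt2, h0⟩ | ⟨heq2, h1⟩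
      · exfalso
        apply hL0
        have hδ0 : L i1 j1 / C i1 j1 = 0 := by linarith
        rw [hδ0] at hδ
        have hz := hδ.smul_const C
        rw [zero_smul] at hz
        have := tendsto_nhds_unique hClim hz
        rw [this]; simp
      · have hτ2 : τ = 2 := by linarith
        have hδval : L i1 j1 / C i1 j1 = 1/2 := by linarith
        rw [hδval] at hδ
        have hLC2 : L = (1/2 : ℝ) • C := by
          have := hδ.smul_const C
          exact tendsto_nhds_unique hClim this
        refine ⟨⟨1/2, by norm_num, N*N + ((-2 : ℤ))•N + ((1:ℤ))•1, fun i j => ?_⟩, Or.inr hτ2⟩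
        have h1 : c i * a j = (1/2 : ℝ) * C i j := by
          rw [← hLe i j, hLC2, Matrix.smul_apply, smul_eq_mul]
        rw [h1]
        congr 1
        rw [cast_entry N (-2) 1 i j, hC2, hd1]
        simp only [Matrix.sub_apply, Matrix.add_apply, Matrix.smul_apply, smul_eq_mul]
        push_cast
        ring
    · -- τ = 1, C ≠ 0
      have hτ1 : τ = 1 := by linarith
      rw [hγ1] at hnr
      have hCeq : C = (1-d) • L := by
        have := hnr.smul_const C
        rw [one_smul] at this
        exact tendsto_nhds_unique this hI3lim
      have hdne : (1:ℝ) - d ≠ 0 := by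
        intro h
        apply hCz
        rw [hCeq, h, zero_smul]
      have hLeq : L = (1-d)⁻¹ • C := by
        rw [hCeq, smul_smul, inv_mul_cancel₀ hdne, one_smul]
      -- integer coefficient for d
      set dz : ℤ := N 0 0*(N 1 1*N 2 2 - N 1 2*N 2 1) - N 0 1*(N 1 0*N 2 2 - N 1 2*N 2 0)
          + N 0 2*(N 1 0*N 2 1 - N 1 1*N 2 0) with hdzdef
      have hdz : d = (dz:ℝ) := by
        rw [hddef, hdzdef]
        simp only [Matrix.map_apply, hNrdef]
        push_cast
        ring
      refine ⟨⟨(1-d)⁻¹, inv_ne_zero hdne, N*N + (-(1+dz))•N + dz•1, fun i j => ?_⟩, Or.inl hτ1⟩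
      have h1 : c i * a j = (1-d)⁻¹ * C i j := by
        rw [← hLe i j, hLeq, Matrix.smul_apply, smul_eq_mul]
      rw [h1]
      congr 1
      rw [cast_entry N (-(1+dz)) dz i j, hC2, hdz]
      simp only [Matrix.sub_apply, Matrix.add_apply, Matrix.smul_apply, smul_eq_mul]
      push_cast
      ring

lemma integral_tendsto_of_unif {f : ℕ → ℝ → ℝ} {ℓ : ℝ}
    (hu : TendstoUniformly f (fun _ => ℓ) atTop)
    (hcont : ∀ n, Continuous (f n)) :
    Tendsto (fun n => ∫ t in (0:ℝ)..1, f n t) atTop (𝓝 ℓ) := by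
  rw [Metric.tendsto_nhds]
  intro ε hε
  have h2 := Metric.tendstoUniformly_iff.mp hu (ε/2) (by positivity)
  filter_upwards [h2] with n hn
  have hfi : IntervalIntegrable (f n) volume 0 1 := (hcont n).intervalIntegrable 0 1
  have hci : IntervalIntegrable (fun _ : ℝ => ℓ) volume 0 1 := intervalIntegrable_const
  have hconst : ∫ t in (0:ℝ)..1, (ℓ : ℝ) = ℓ := by simp
  have key : ∫ t in (0:ℝ)..1, (f n t - ℓ) = (∫ t in (0:ℝ)..1, f n t) - ℓ := by
    rw [intervalIntegral.integral_sub hfi hci, hconst]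
  have hbound : ‖∫ t in (0:ℝ)..1, (f n t - ℓ)‖ ≤ (ε/2) * |1 - 0| := by
    apply intervalIntegral.norm_integral_le_of_norm_le_const
    intro x hx
    have := hn x
    rw [dist_comm] at this
    simpa [Real.norm_eq_abs, Real.dist_eq] using this.le
  rw [Real.dist_eq]
  calc |(∫ t in (0:ℝ)..1, f n t) - ℓ| = ‖∫ t in (0:ℝ)..1, (f n t - ℓ)‖ := by
        rw [key, Real.norm_eq_abs]
    _ ≤ (ε/2) * |1 - 0| := hbound
    _ < ε := by rw [show |(1:ℝ) - 0| = 1 by norm_num]; linarith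



lemma stepA (F : (Fin 3 → ℝ) → (Fin 3 → ℝ)) (N : Matrix (Fin 3) (Fin 3) ℤ)
    (hF : ContDiff ℝ 1 F)
    (hper : ∀ (x : Fin 3 → ℝ) (m : Fin 3 → ℤ),
      F (x + fun i => (m i : ℝ)) = F x + fun i => ((N *ᵥ m) i : ℝ))
    (τ : ℝ) (a c : Fin 3 → ℝ)
    (hconv : TendstoUniformly (fun (n : ℕ) x => ((n : ℝ) ^ τ)⁻¹ • Dmat (F^[n]) x)
      (fun _ => vecMulVec c a) atTop) :
    Tendsto (fun n : ℕ => ((n:ℝ)^τ)⁻¹ • ((N.map (fun z : ℤ => (z:ℝ)))^n)) atTop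
      (𝓝 (vecMulVec c a)) := by
  have hFn : ∀ n : ℕ, ContDiff ℝ 1 (F^[n]) := by
    intro n
    induction n with
    | zero => simpa using contDiff_id
    | succ n ih => rw [Function.iterate_succ']; exact hF.comp ih
  have hpern : ∀ (n : ℕ) (x : Fin 3 → ℝ) (m : Fin 3 → ℤ),
      F^[n] (x + fun i => (m i : ℝ)) = F^[n] x + fun i => (((N^n) *ᵥ m) i : ℝ) := by
    intro n
    induction n with
    | zero =>
      intro x m
      simp [Matrix.one_mulVec]
    | succ n ih =>
      intro x m
      rw [Function.iterate_succ', Function.comp_apply, Function.comp_apply, ih x m, hper]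
      congr 1
      funext i
      rw [Matrix.mulVec_mulVec, ← pow_succ']
  -- the key integral identity
  have hkey : ∀ (n : ℕ) (i j : Fin 3),
      (((N^n) i j : ℤ) : ℝ) = ∫ t in (0:ℝ)..1, (Dmat (F^[n]) (t • (Pi.single j 1 : Fin 3 → ℝ))) i j := by
    intro n i j
    have hg : ContDiff ℝ 1 (fun y => F^[n] y i) := (contDiff_pi.mp (hFn n)) i
    have hderiv : ∀ t : ℝ, HasDerivAt (fun u : ℝ => F^[n] (u • (Pi.single j 1 : Fin 3 → ℝ)) i)
        ((Dmat (F^[n]) (t • (Pi.single j 1 : Fin 3 → ℝ))) i j) t := by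
      intro t
      have hsm : HasDerivAt (fun u : ℝ => u • (Pi.single j 1 : Fin 3 → ℝ))
          ((Pi.single j 1 : Fin 3 → ℝ)) t := by
        simpa using (hasDerivAt_id t).smul_const (Pi.single j 1 : Fin 3 → ℝ)
      have hfd : HasFDerivAt (fun y => F^[n] y i)
          (fderiv ℝ (fun y => F^[n] y i) (t • (Pi.single j 1 : Fin 3 → ℝ))) (t • (Pi.single j 1 : Fin 3 → ℝ)) :=
        ((hg.differentiable one_ne_zero) _).hasFDerivAt
      exact hfd.comp_hasDerivAt t hsm
    have hcont : Continuous fun t : ℝ => (Dmat (F^[n]) (t • (Pi.single j 1 : Fin 3 → ℝ))) i j := by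
      have h1 : Continuous fun x : Fin 3 → ℝ => fderiv ℝ (fun y => F^[n] y i) x :=
        hg.continuous_fderiv one_ne_zero
      have h2 : Continuous fun t : ℝ => t • (Pi.single j 1 : Fin 3 → ℝ) :=
        continuous_id.smul continuous_const
      exact (ContinuousLinearMap.apply ℝ ℝ (Pi.single j 1 : Fin 3 → ℝ)).continuous.comp
        (h1.comp h2)
    have hint : ∫ t in (0:ℝ)..1, (Dmat (F^[n]) (t • (Pi.single j 1 : Fin 3 → ℝ))) i j
        = F^[n] ((1:ℝ) • (Pi.single j 1 : Fin 3 → ℝ)) i - F^[n] ((0:ℝ) • (Pi.single j 1 : Fin 3 → ℝ)) i :=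
      intervalIntegral.integral_eq_sub_of_hasDerivAt (fun t _ => hderiv t)
        (hcont.intervalIntegrable 0 1)
    rw [hint, one_smul, zero_smul]
    have hcast : (Pi.single j 1 : Fin 3 → ℝ) = fun i' => (((Pi.single j 1 : Fin 3 → ℤ)) i' : ℝ) := by
      funext i'
      rcases eq_or_ne i' j with h | h <;> simp [Pi.single_apply, h]
    have := hpern n 0 ((Pi.single j 1 : Fin 3 → ℤ))
    rw [zero_add] at this
    rw [hcast, this]
    simp [Matrix.mulVec_single]
  -- entrywise uniform convergence
  have hunif : ∀ i j : Fin 3,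
      TendstoUniformly (fun (n : ℕ) (x : Fin 3 → ℝ) =>
        (((n : ℝ) ^ τ)⁻¹ • Dmat (F^[n]) x) i j) (fun _ => c i * a j) atTop := by
    intro i j
    have hUC : UniformContinuous fun M : Matrix (Fin 3) (Fin 3) ℝ => M i j := by
      have h1 : UniformContinuous fun M : Matrix (Fin 3) (Fin 3) ℝ => M i :=
        uniformContinuous_pi.mp uniformContinuous_id i
      exact uniformContinuous_pi.mp h1 j
    have := hUC.comp_tendstoUniformly hconv
    simpa [Function.comp_def, Matrix.vecMulVec_apply] using this
  -- entrywise limits of N^n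
  have hentry : ∀ i j : Fin 3, Tendsto (fun n : ℕ => ((n:ℝ)^τ)⁻¹ * (((N^n) i j : ℤ) : ℝ))
      atTop (𝓝 (c i * a j)) := by
    intro i j
    have hcomp := (hunif i j).comp (fun t : ℝ => t • (Pi.single j 1 : Fin 3 → ℝ))
    have hcont : ∀ n : ℕ, Continuous fun t : ℝ =>
        (((n : ℝ) ^ τ)⁻¹ • Dmat (F^[n]) (t • (Pi.single j 1 : Fin 3 → ℝ))) i j := by
      intro n
      have hg : ContDiff ℝ 1 (fun y => F^[n] y i) := (contDiff_pi.mp (hFn n)) i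
      have h1 : Continuous fun x : Fin 3 → ℝ => fderiv ℝ (fun y => F^[n] y i) x :=
        hg.continuous_fderiv one_ne_zero
      have h2 : Continuous fun t : ℝ => t • (Pi.single j 1 : Fin 3 → ℝ) :=
        continuous_id.smul continuous_const
      have h3 : Continuous fun t : ℝ => (Dmat (F^[n]) (t • (Pi.single j 1 : Fin 3 → ℝ))) i j := by
        have h4 := (ContinuousLinearMap.apply ℝ ℝ (Pi.single j 1 : Fin 3 → ℝ)).continuous.comp
          (h1.comp h2)
        simpa [Function.comp_def, Dmat] using h4
      simpa [Matrix.smul_apply, Pi.mul_def] using continuous_const.mul h3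
    have hI := integral_tendsto_of_unif (f := fun n t =>
      (((n : ℝ) ^ τ)⁻¹ • Dmat (F^[n]) (t • (Pi.single j 1 : Fin 3 → ℝ))) i j) (ℓ := c i * a j)
      hcomp hcont
    refine hI.congr fun n => ?_
    rw [hkey n i j]
    rw [← intervalIntegral.integral_const_mul]
    congr 1
  -- assemble
  have hmapn : ∀ n : ℕ, (N.map (fun z : ℤ => (z:ℝ)))^n = (N^n).map (fun z : ℤ => (z:ℝ)) := by
    intro n
    induction n with
    | zero =>
      simp only [pow_zero]
      exact (Matrix.map_one _ (by simp) (by simp)).symm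
    | succ n ih =>
      rw [pow_succ, pow_succ, ih]
      exact (Matrix.map_mul (L := N^n) (M := N) (f := Int.castRingHom ℝ)).symm
  refine tendsto_pi_nhds.mpr ?_
  intro i
  rw [tendsto_pi_nhds]
  intro j
  have := hentry i j
  refine this.congr fun n => ?_
  rw [hmapn n]
  simp [Matrix.smul_apply, Matrix.map_apply, Matrix.vecMulVec_apply]

lemma part1_of {a : Fin 3 → ℝ} (ha : a ≠ 0) {σ : ℝ} (hσ : σ ≠ 0) (w : Fin 3 → ℤ)
    (haw : ∀ j, a j = σ * (w j : ℝ)) :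
    ∃ m₁ m₂ : Fin 3 → ℤ,
      ((fun i => (m₁ i : ℝ)) ⬝ᵥ a = 0) ∧ ((fun i => (m₂ i : ℝ)) ⬝ᵥ a = 0) ∧
      LinearIndependent ℝ ![fun i => (m₁ i : ℝ), fun i => (m₂ i : ℝ)] := by
  have hw : ∃ k, w k ≠ 0 := by
    by_contra h
    push_neg at h
    apply ha
    funext j
    rw [haw j, h j]
    simp
  obtain ⟨k, hk⟩ := hw
  have hkR : ((w k : ℝ)) ≠ 0 := Int.cast_ne_zero.mpr hk
  fin_cases k
  · refine ⟨![w 1, -w 0, 0], ![w 2, 0, -w 0], ?_, ?_, ?_⟩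
    · simp [dotProduct, Fin.sum_univ_three, haw 0, haw 1, haw 2]; ring
    · simp [dotProduct, Fin.sum_univ_three, haw 0, haw 1, haw 2]; ring
    · refine linearIndependent_fin2.mpr ⟨?_, ?_⟩
      · intro h
        have := congrFun h 2
        simp at this
        exact hkR (show ((w 0 : ℤ) : ℝ) = 0 by exact_mod_cast this)
      · intro α h
        have := congrFun h 1
        simp at this
        exact hkR (show ((w 0 : ℤ) : ℝ) = 0 by exact_mod_cast this)
  · refine ⟨![-w 1, w 0, 0], ![0, w 2, -w 1], ?_, ?_, ?_⟩
    · simp [dotProduct, Fin.sum_univ_three, haw 0, haw 1, haw 2]; ring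
    · simp [dotProduct, Fin.sum_univ_three, haw 0, haw 1, haw 2]; ring
    · refine linearIndependent_fin2.mpr ⟨?_, ?_⟩
      · intro h
        have := congrFun h 2
        simp at this
        exact hkR (show ((w 1 : ℤ) : ℝ) = 0 by exact_mod_cast this)
      · intro α h
        have := congrFun h 0
        simp at this
        exact hkR (show ((w 1 : ℤ) : ℝ) = 0 by exact_mod_cast this)
  · refine ⟨![-w 2, 0, w 0], ![0, -w 2, w 1], ?_, ?_, ?_⟩
    · simp [dotProduct, Fin.sum_univ_three, haw 0, haw 1, haw 2]; ring
    · simp [dotProduct, Fin.sum_univ_three, haw 0, haw 1, haw 2]; ring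
    · refine linearIndependent_fin2.mpr ⟨?_, ?_⟩
      · intro h
        have := congrFun h 1
        simp at this
        exact hkR (show ((w 2 : ℤ) : ℝ) = 0 by exact_mod_cast this)
      · intro α h
        have := congrFun h 0
        simp at this
        exact hkR (show ((w 2 : ℤ) : ℝ) = 0 by exact_mod_cast this)

/-- Let `f : 𝕋³ → 𝕋³` be an area-preserving, orientation-preserving
`C¹`-diffeomorphism with `τ`-polynomial uniform growth of the derivative whose limit
function is the constant rank-one matrix `cᵀa`, where `a, c ∈ ℝ³` are mutually
orthogonal non-zero vectors.  Then the subgroup `G(a) = {m ∈ ℤ³ : m ⊥ a}` has rank `2`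
(i.e. it contains two linearly independent vectors) and `τ = 1` or `τ = 2`. -/
theorem stmt_10
    (f finv : (Fin 3 → 𝕋) → (Fin 3 → 𝕋))
    (F Finv : (Fin 3 → ℝ) → (Fin 3 → ℝ))
    (N : Matrix (Fin 3) (Fin 3) ℤ) (hNdet : IsUnit N.det)
    (hF : ContDiff ℝ 1 F) (hFinv : ContDiff ℝ 1 Finv)
    (hlift : ∀ x, f (Tproj x) = Tproj (F x))
    (hliftinv : ∀ x, finv (Tproj x) = Tproj (Finv x))
    (hper : ∀ (x : Fin 3 → ℝ) (m : Fin 3 → ℤ),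
      F (x + fun i => (m i : ℝ)) = F x + fun i => ((N *ᵥ m) i : ℝ))
    (hinv₁ : Function.LeftInverse finv f) (hinv₂ : Function.RightInverse finv f)
    (harea : MeasurePreserving f volume volume)
    (horient : ∀ x, 0 < (Dmat F x).det)
    (τ : ℝ) (hτ : 0 < τ)
    (a c : Fin 3 → ℝ) (ha : a ≠ 0) (hc : c ≠ 0) (horth : a ⬝ᵥ c = 0)
    (hconv : TendstoUniformly
      (fun (n : ℕ) x => ((n : ℝ) ^ τ)⁻¹ • Dmat (F^[n]) x)
      (fun _ => vecMulVec c a) atTop) :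
    (∃ m₁ m₂ : Fin 3 → ℤ,
      ((fun i => (m₁ i : ℝ)) ⬝ᵥ a = 0) ∧ ((fun i => (m₂ i : ℝ)) ⬝ᵥ a = 0) ∧
      LinearIndependent ℝ ![fun i => (m₁ i : ℝ), fun i => (m₂ i : ℝ)]) ∧
    (τ = 1 ∨ τ = 2) := by
  have hmat := stepA F N hF hper τ a c hconv
  obtain ⟨⟨ρ, hρ, W, hW⟩, hτ12⟩ := stepB N hτ ha hc hmat
  refine ⟨?_, hτ12⟩
  obtain ⟨i0, hi0⟩ := Function.ne_iff.mp hc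
  simp only [Pi.zero_apply] at hi0
  have hσ : ρ / c i0 ≠ 0 := div_ne_zero hρ hi0
  have haw : ∀ j, a j = (ρ / c i0) * (W i0 j : ℝ) := by
    intro j
    have h := hW i0 j
    field_simp
    linear_combination h
  exact part1_of ha hσ (W i0) haw

end
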